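/- Let $Y \subseteq \mathrm{Conf}_k([n])$ be an order ideal in the Bruhat order on $\mathrm{Conf}_k([n])$. Then any linear extension of $Y$ is a flag shelling order, i.e., listing the elements $L_1, \ldots, L_h$ of $Y$ in a way compatible with the Bruhat order, the sequence of flags $(P(L_1), \ldots, P(L_h))$ is a shelling order of the simplicial complex $\Delta(Y)$. -/

import Mathlib

/-- Increasing enumeration of a finite set of naturals. -/
def sortedL (x : Finset ℕ) : List ℕ := x.sort (· ≤ ·)

/-- The Gale (Bruhat) order on finite subsets of ℕ: componentwise comparison of
the increasing enumerations. -/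
def GaleLE (x y : Finset ℕ) : Prop :=
  ∀ i (hx : i < (sortedL x).length) (hy : i < (sortedL y).length),
    (sortedL x).get ⟨i, hx⟩ ≤ (sortedL y).get ⟨i, hy⟩

def GaleLT (x y : Finset ℕ) : Prop := GaleLE x y ∧ x ≠ y

/-- `y` is a valid element of `Conf_k([n])`: an injective `k`-tuple from `[n]`
(1-based positions `1, …, k`). -/
def ValidTuple (n k : ℕ) (y : ℕ → ℕ) : Prop :=
  (∀ j, 1 ≤ j → j ≤ k → y j ∈ Finset.Icc 1 n) ∧
  (∀ i j, 1 ≤ i → i ≤ k → 1 ≤ j → j ≤ k → y i = y j → i = j)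

/-- `P^{(r)}(y)`: the set of the first `r` entries of the tuple `y`. -/
def Pr (y : ℕ → ℕ) (r : ℕ) : Finset ℕ := (Finset.Icc 1 r).image y

/-- The Bruhat order on `Conf_k([n])`: `x ≤ y` iff `P^{(i)}(x) ≤ P^{(i)}(y)` in
the Gale order for all `i ∈ [k]`. -/
def BruhatLE (k : ℕ) (x y : ℕ → ℕ) : Prop :=
  ∀ i, 1 ≤ i → i ≤ k → GaleLE (Pr x i) (Pr y i)

def BruhatLT (k : ℕ) (x y : ℕ → ℕ) : Prop :=
  BruhatLE k x y ∧ ∃ i, 1 ≤ i ∧ i ≤ k ∧ x i ≠ y i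

/-- The flag `P(y) = {P^{(1)}(y), …, P^{(k)}(y)}`, a facet of the order complex
`Δ(Y)`. -/
def Pflag (k : ℕ) (y : ℕ → ℕ) : Finset (Finset ℕ) := (Finset.Icc 1 k).image (Pr y)

def cnt (S : Finset ℕ) (m : ℕ) : ℕ := (S.filter (· ≤ m)).card

lemma sortedL_strict (S : Finset ℕ) : ∀ i j : Fin (sortedL S).length, i < j →
    (sortedL S).get i < (sortedL S).get j :=
  fun i j hij => Finset.sortedLT_sort S hij

lemma mem_sortedL {S : Finset ℕ} {a : ℕ} : a ∈ sortedL S ↔ a ∈ S := Finset.mem_sort _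

lemma length_sortedL (S : Finset ℕ) : (sortedL S).length = S.card := Finset.length_sort _

lemma getD_strict (S : Finset ℕ) {i j : ℕ} (hj : j < (sortedL S).length) (hij : i < j) :
    (sortedL S).getD i 0 < (sortedL S).getD j 0 := by
  have hi : i < (sortedL S).length := lt_trans hij hj
  rw [List.getD_eq_get _ _ ⟨i, hi⟩, List.getD_eq_get _ _ ⟨j, hj⟩]
  exact sortedL_strict S ⟨i, hi⟩ ⟨j, hj⟩ hij

lemma getD_mem (S : Finset ℕ) {i : ℕ} (hi : i < (sortedL S).length) :
    (sortedL S).getD i 0 ∈ S := by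
  rw [List.getD_eq_get _ _ ⟨i, hi⟩]; exact mem_sortedL.mp (List.get_mem _ _)

lemma get_le_iff (S : Finset ℕ) (i : ℕ) (h : i < (sortedL S).length) (m : ℕ) :
    (sortedL S).get ⟨i, h⟩ ≤ m ↔ i < cnt S m := by
  rw [← List.getD_eq_get _ 0 ⟨i, h⟩, Fin.val_mk]
  constructor
  · intro hle
    have : (Finset.range (i+1)).card ≤ (S.filter (· ≤ m)).card := by
      apply Finset.card_le_card_of_injOn (fun j => (sortedL S).getD j 0)
      · intro j hj
        have hj' : j ≤ i := by have := Finset.mem_range.mp hj; omega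
        have hjl : j < (sortedL S).length := by omega
        refine Finset.mem_filter.mpr ⟨getD_mem S hjl, ?_⟩
        rcases eq_or_lt_of_le hj' with rfl | hlt
        · exact hle
        · exact le_of_lt (lt_of_lt_of_le (getD_strict S h hlt) hle)
      · intro a ha b hb hab
        simp only [Finset.coe_range, Set.mem_Iio] at ha hb
        by_contra hne
        rcases lt_or_gt_of_ne hne with hl | hl
        · exact absurd hab (ne_of_lt (getD_strict S (by omega) hl))
        · exact absurd hab.symm (ne_of_lt (getD_strict S (by omega) hl))
    simpa [cnt] using this
  · intro hlt
    by_contra hgt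
    push_neg at hgt
    have : (S.filter (· ≤ m)).card ≤ (Finset.range i).card := by
      apply Finset.card_le_card_of_injOn (fun a => (sortedL S).idxOf a)
      · intro a ha
        obtain ⟨haS, ham⟩ := Finset.mem_filter.mp ha
        have hmem : a ∈ sortedL S := mem_sortedL.mpr haS
        have hidx : (sortedL S).idxOf a < (sortedL S).length := List.idxOf_lt_length_iff.mpr hmem
        have hget : (sortedL S).getD ((sortedL S).idxOf a) 0 = a := by
          rw [List.getD_eq_get _ _ ⟨_, hidx⟩]; exact List.getElem_idxOf hidx
        refine Finset.mem_range.mpr ?_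
        by_contra hge
        push_neg at hge
        rcases eq_or_lt_of_le hge with heq | hlt'
        · rw [← heq] at hget; rw [hget] at hgt; omega
        · have := getD_strict S hidx hlt'
          rw [hget] at this; omega
      · intro a ha b hb hab
        obtain ⟨haS, _⟩ := Finset.mem_filter.mp ha
        obtain ⟨hbS, _⟩ := Finset.mem_filter.mp hb
        have h1 := List.getElem_idxOf (List.idxOf_lt_length_iff.mpr (mem_sortedL.mpr haS))
        have h2 := List.getElem_idxOf (List.idxOf_lt_length_iff.mpr (mem_sortedL.mpr hbS))
        exact (List.idxOf_inj (mem_sortedL.mpr haS)).mp hab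
    have : cnt S m ≤ i := by simpa [cnt] using this
    omega

lemma gale_of_cnt {A B : Finset ℕ} (h : ∀ m, cnt B m ≤ cnt A m) : GaleLE A B := by
  intro i hx hy
  rw [get_le_iff]
  have : i < cnt B ((sortedL B).get ⟨i, hy⟩) := (get_le_iff B i hy _).mp (le_refl _)
  exact lt_of_lt_of_le this (h _)

lemma cnt_of_gale {A B : Finset ℕ} (hg : GaleLE A B) (hc : A.card = B.card) :
    ∀ m, cnt B m ≤ cnt A m := by
  intro m
  by_contra hcon
  push_neg at hcon
  set i := cnt A m with hi
  have hiB : i < cnt B m := hcon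
  have hcntB : cnt B m ≤ B.card := Finset.card_filter_le _ _
  have hyB : i < (sortedL B).length := by rw [length_sortedL]; omega
  have hxA : i < (sortedL A).length := by rw [length_sortedL, hc]; omega
  have h1 : (sortedL B).get ⟨i, hyB⟩ ≤ m := (get_le_iff B i hyB m).mpr hiB
  have h2 : ¬ ((sortedL A).get ⟨i, hxA⟩ ≤ m) := by
    rw [get_le_iff]; omega
  exact h2 (le_trans (hg i hxA hyB) h1)

lemma gale_refl (A : Finset ℕ) : GaleLE A A := fun i hx hy => le_refl _

lemma cnt_insert {a : ℕ} {S : Finset ℕ} (ha : a ∉ S) (m : ℕ) :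
    cnt (insert a S) m = cnt S m + (if a ≤ m then 1 else 0) := by
  unfold cnt
  rw [Finset.filter_insert]
  split
  · rw [Finset.card_insert_of_notMem (fun hc => ha (Finset.mem_filter.mp hc).1)]
  · rfl

lemma gale_insert_le {w c : ℕ} {S : Finset ℕ} (hwc : w ≤ c) (hw : w ∉ S) (hc : c ∉ S) :
    GaleLE (insert w S) (insert c S) := by
  apply gale_of_cnt
  intro m
  rw [cnt_insert hw, cnt_insert hc]
  split <;> split <;> omega

lemma mem_Pr {y : ℕ → ℕ} {r a : ℕ} : a ∈ Pr y r ↔ ∃ p, 1 ≤ p ∧ p ≤ r ∧ y p = a := by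
  simp [Pr, Finset.mem_image, Finset.mem_Icc]
  constructor
  · rintro ⟨p, ⟨h1, h2⟩, h3⟩; exact ⟨p, h1, h2, h3⟩
  · rintro ⟨p, h1, h2, h3⟩; exact ⟨p, ⟨h1, h2⟩, h3⟩

lemma Icc_one_succ (r : ℕ) : Finset.Icc 1 (r+1) = insert (r+1) (Finset.Icc 1 r) := by
  ext a; simp [Finset.mem_Icc]; omega

lemma Pr_succ (y : ℕ → ℕ) (r : ℕ) : Pr y (r+1) = insert (y (r+1)) (Pr y r) := by
  rw [Pr, Icc_one_succ, Finset.image_insert]; rfl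

lemma Pr_card {n k : ℕ} {y : ℕ → ℕ} (hv : ValidTuple n k y) {r : ℕ} (hr : r ≤ k) :
    (Pr y r).card = r := by
  rw [Pr, Finset.card_image_of_injOn, Nat.card_Icc]
  · omega
  · intro a ha b hb hab
    rw [Finset.coe_Icc, Set.mem_Icc] at ha hb
    exact hv.2 a b ha.1 (le_trans ha.2 hr) hb.1 (le_trans hb.2 hr) hab

lemma Pr_not_mem {n k : ℕ} {y : ℕ → ℕ} (hv : ValidTuple n k y) {r p : ℕ}
    (hrp : r < p) (hpk : p ≤ k) : y p ∉ Pr y r := by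
  intro hc
  obtain ⟨q, hq1, hq2, hq3⟩ := mem_Pr.mp hc
  have := hv.2 q p hq1 (by omega) (by omega) hpk hq3
  omega

lemma Pr_congr {y z : ℕ → ℕ} {s : ℕ} (h : ∀ p, 1 ≤ p → p ≤ s → z p = y p) :
    Pr z s = Pr y s := by
  apply Finset.image_congr
  intro a ha
  rw [Finset.coe_Icc, Set.mem_Icc] at ha
  exact h a ha.1 ha.2

lemma exists_good (n k : ℕ) (x y : ℕ → ℕ) (hvx : ValidTuple n k x) (hvy : ValidTuple n k y) :
    ∀ d s₀, k - s₀ = d → 1 ≤ s₀ → s₀ ≤ k →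
    (∃ m, cnt (Pr y s₀) m < cnt (Pr x s₀) m ∧ m < y s₀) →
    ∃ r w, 1 ≤ r ∧ r ≤ k ∧ (r < k → w = y (r+1)) ∧ w < y r ∧ 1 ≤ w ∧ w ≤ n ∧ w ∉ Pr y r ∧
      ∃ m, cnt (Pr y r) m < cnt (Pr x r) m := by
  intro d
  induction d with
  | zero =>
    intro s₀ hd h1 hk ⟨m, hm, hmy⟩
    have hs : s₀ = k := by omega
    -- r = k case: find w
    have : ¬ ((Pr x s₀).filter (· ≤ m) ⊆ (Pr y s₀).filter (· ≤ m)) := by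
      intro hsub
      exact absurd (Finset.card_le_card hsub) (by unfold cnt at hm; omega)
    obtain ⟨w, hw1, hw2⟩ := Finset.not_subset.mp this
    obtain ⟨hwx, hwm⟩ := Finset.mem_filter.mp hw1
    have hwy : w ∉ Pr y s₀ := fun hc => hw2 (Finset.mem_filter.mpr ⟨hc, hwm⟩)
    obtain ⟨p, hp1, hp2, hp3⟩ := mem_Pr.mp hwx
    have hwIcc := hvx.1 p hp1 (by omega)
    rw [Finset.mem_Icc] at hwIcc
    exact ⟨s₀, w, h1, by omega, fun hc => by omega, by omega,
      by omega, by omega, hwy, m, hm⟩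
  | succ d ih =>
    intro s₀ hd h1 hk ⟨m, hm, hmy⟩
    have hsk : s₀ < k := by omega
    by_cases hdes : y (s₀ + 1) < y s₀
    · -- descent: r = s₀, w = y (s₀+1)
      have hwIcc := hvy.1 (s₀+1) (by omega) (by omega)
      rw [Finset.mem_Icc] at hwIcc
      exact ⟨s₀, y (s₀+1), h1, by omega, fun _ => rfl, hdes, by omega, by omega,
        Pr_not_mem hvy (by omega) (by omega), m, hm⟩
    · -- ascent: propagate
      have hne : y (s₀+1) ≠ y s₀ := fun hc => by
        have := hvy.2 (s₀+1) s₀ (by omega) (by omega) h1 (by omega) hc; omega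
      have hasc : y s₀ < y (s₀+1) := by omega
      apply ih (s₀+1) (by omega) (by omega) (by omega)
      refine ⟨m, ?_, by omega⟩
      rw [Pr_succ y s₀, Pr_succ x s₀,
        cnt_insert (Pr_not_mem hvy (by omega) (by omega)),
        cnt_insert (Pr_not_mem hvx (by omega) (by omega))]
      have : ¬ (y (s₀+1) ≤ m) := by omega
      split <;> split <;> omega

lemma key (n k r w : ℕ) (y : ℕ → ℕ) (hvy : ValidTuple n k y)
    (hr1 : 1 ≤ r) (hrk : r ≤ k) (hw : r < k → w = y (r+1)) (hlt : w < y r)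
    (hw1 : 1 ≤ w) (hwn : w ≤ n) (hwm : w ∉ Pr y r) :
    ∃ z : ℕ → ℕ, ValidTuple n k z ∧ (∀ s, 1 ≤ s → s ≤ k → s ≠ r → Pr z s = Pr y s) ∧
      GaleLE (Pr z r) (Pr y r) ∧ Pr z r ≠ Pr y r ∧ BruhatLE k z y ∧ z r ≠ y r := by
  classical
  set z : ℕ → ℕ := fun p => if p = r then w else if p = r+1 then y r else y p with hz
  have hzr : z r = w := by simp [hz]
  have hzr1 : z (r+1) = y r := by simp [hz]
  have hzo : ∀ p, p ≠ r → p ≠ r + 1 → z p = y p := by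
    intro p h1 h2; simp [hz, h1, h2]
  -- Pr at r-1 : write r = (r-1)+1
  obtain ⟨r', hr'⟩ : ∃ r', r = r' + 1 := ⟨r - 1, by omega⟩
  have hges : Pr z r' = Pr y r' := Pr_congr (fun p hp1 hp2 => hzo p (by omega) (by omega))
  have hPzr : Pr z r = insert w (Pr y r') := by
    rw [hr', Pr_succ, ← hr', hzr, hges]
  have hPyr : Pr y r = insert (y r) (Pr y r') := by rw [hr', Pr_succ, ← hr']
  have hwr' : w ∉ Pr y r' := fun hc => hwm (by rw [hPyr]; exact Finset.mem_insert_of_mem hc)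
  have hyr' : y r ∉ Pr y r' := Pr_not_mem hvy (by omega) hrk
  have hgale : GaleLE (Pr z r) (Pr y r) := by
    rw [hPzr, hPyr]; exact gale_insert_le (le_of_lt hlt) hwr' hyr'
  have hne : Pr z r ≠ Pr y r := by
    intro hc
    have : y r ∈ Pr z r := by rw [hc, hPyr]; exact Finset.mem_insert_self _ _
    rw [hPzr] at this
    rcases Finset.mem_insert.mp this with h | h
    · omega
    · exact hyr' h
  have hPs : ∀ s, 1 ≤ s → s ≤ k → s ≠ r → Pr z s = Pr y s := by
    intro s hs1 hsk hsr
    rcases lt_or_gt_of_ne hsr with hlt' | hgt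
    · exact Pr_congr (fun p hp1 hp2 => hzo p (by omega) (by omega))
    · -- s > r, so r < k and w = y (r+1)
      have hrk' : r < k := by omega
      have hweq : w = y (r+1) := hw hrk'
      ext a
      rw [mem_Pr, mem_Pr]
      constructor
      · rintro ⟨p, hp1, hp2, hp3⟩
        by_cases h1 : p = r
        · exact ⟨r+1, by omega, by omega, by rw [← hweq, ← hzr]; exact h1 ▸ hp3⟩
        · by_cases h2 : p = r + 1
          · exact ⟨r, by omega, by omega, by rw [← hzr1]; exact h2 ▸ hp3⟩
          · exact ⟨p, hp1, hp2, by rw [← hzo p h1 h2]; exact hp3⟩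
      · rintro ⟨p, hp1, hp2, hp3⟩
        by_cases h1 : p = r
        · exact ⟨r+1, by omega, by omega, by rw [hzr1]; exact h1 ▸ hp3⟩
        · by_cases h2 : p = r + 1
          · exact ⟨r, by omega, by omega, by rw [hzr, hweq]; exact h2 ▸ hp3⟩
          · exact ⟨p, hp1, hp2, by rw [hzo p h1 h2]; exact hp3⟩
  refine ⟨z, ⟨?_, ?_⟩, hPs, hgale, hne, ?_, by omega⟩
  · -- range condition
    intro p hp1 hpk
    by_cases h1 : p = r
    · rw [h1, hzr, Finset.mem_Icc]; omega
    · by_cases h2 : p = r + 1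
      · rw [h2, hzr1]; exact hvy.1 r hr1 hrk
      · rw [hzo p h1 h2]; exact hvy.1 p hp1 hpk
  · -- injectivity
    intro p q hp1 hpk hq1 hqk hpq
    have hval : ∀ p', 1 ≤ p' → p' ≤ k → p' ≠ r → p' ≠ r + 1 → z p' ≠ w := by
      intro p' h1' h2' h3' h4' hc
      rw [hzo p' h3' h4'] at hc
      exact hwm (mem_Pr.mpr ⟨p', h1', by
        -- need p' ≤ r : if p' > r then r < k, w = y (r+1), y p' = y (r+1) → p' = r+1
        by_cases h5 : p' ≤ r
        · exact h5
        · exfalso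
          have hrk' : r < k := by omega
          rw [hw hrk'] at hc
          have := hvy.2 p' (r+1) h1' h2' (by omega) (by omega) hc
          omega, hc⟩)
    by_cases h1 : p = r <;> by_cases h2 : q = r
    · omega
    · exfalso
      rw [h1, hzr] at hpq
      by_cases h3 : q = r + 1
      · rw [h3, hzr1] at hpq; omega
      · exact hval q hq1 hqk h2 h3 hpq.symm
    · exfalso
      rw [h2, hzr] at hpq
      by_cases h3 : p = r + 1
      · rw [h3, hzr1] at hpq; omega
      · exact hval p hp1 hpk h1 h3 hpq
    · by_cases h3 : p = r + 1 <;> by_cases h4 : q = r + 1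
      · omega
      · exfalso
        rw [h3, hzr1, hzo q h2 h4] at hpq
        have := hvy.2 r q hr1 hrk hq1 hqk hpq
        omega
      · exfalso
        rw [h4, hzr1, hzo p h1 h3] at hpq
        have := hvy.2 p r hp1 hpk hr1 hrk hpq
        omega
      · rw [hzo p h1 h3, hzo q h2 h4] at hpq
        exact hvy.2 p q hp1 hpk hq1 hqk hpq
  · -- BruhatLE
    intro s hs1 hsk
    by_cases hsr : s = r
    · rw [hsr]; exact hgale
    · rw [hPs s hs1 hsk hsr]; exact gale_refl _

lemma Pr_zero (y : ℕ → ℕ) : Pr y 0 = ∅ := by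
  rw [Pr, Finset.Icc_eq_empty (by omega), Finset.image_empty]

lemma Pr_inj_flag {n k : ℕ} {y : ℕ → ℕ} (hv : ValidTuple n k y) {s t : ℕ}
    (hs : s ≤ k) (ht : t ≤ k) (h : Pr y s = Pr y t) : s = t := by
  have h1 := Pr_card hv hs
  rw [h, Pr_card hv ht] at h1
  omega

lemma mem_Pflag {k : ℕ} {y : ℕ → ℕ} {a : Finset ℕ} :
    a ∈ Pflag k y ↔ ∃ s, 1 ≤ s ∧ s ≤ k ∧ Pr y s = a := by
  simp only [Pflag, Finset.mem_image, Finset.mem_Icc]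
  constructor
  · rintro ⟨s, ⟨h1, h2⟩, h3⟩; exact ⟨s, h1, h2, h3⟩
  · rintro ⟨s, h1, h2, h3⟩; exact ⟨s, ⟨h1, h2⟩, h3⟩


/-- Any linear extension `L 1, …, L h` of an order ideal `Y` of the Bruhat
order on `Conf_k([n])` is a flag shelling order: the sequence of flags
`P(L 1), …, P(L h)` is a shelling order of `Δ(Y)`. -/
theorem ideal_linear_extension_is_flag_shelling
    (n k h : ℕ) (L : ℕ → (ℕ → ℕ))
    (hvalid : ∀ m, 1 ≤ m → m ≤ h → ValidTuple n k (L m))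
    (hdist : ∀ m m', 1 ≤ m → m < m' → m' ≤ h →
      ∃ p, 1 ≤ p ∧ p ≤ k ∧ L m p ≠ L m' p)
    (hideal : ∀ m, 1 ≤ m → m ≤ h → ∀ x : ℕ → ℕ, ValidTuple n k x →
      BruhatLE k x (L m) → ∃ m', 1 ≤ m' ∧ m' ≤ h ∧ ∀ p, 1 ≤ p → p ≤ k → L m' p = x p)
    (hlin : ∀ m m', 1 ≤ m → m ≤ h → 1 ≤ m' → m' ≤ h →
      BruhatLT k (L m) (L m') → m < m') :
    ∀ i j, 1 ≤ i → i < j → j ≤ h → ∃ z, 1 ≤ z ∧ z < j ∧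
      (Pflag k (L z) ∩ Pflag k (L j)).card = (Pflag k (L j)).card - 1 ∧
      Pflag k (L i) ∩ Pflag k (L j) ⊆ Pflag k (L z) ∩ Pflag k (L j) := by
  classical
  intro i j hi hij hjh
  have hih : i ≤ h := by omega
  have hj1 : 1 ≤ j := by omega
  have hvx : ValidTuple n k (L i) := hvalid i hi hih
  have hvy : ValidTuple n k (L j) := hvalid j hj1 hjh
  obtain ⟨p₀, hp₀1, hp₀k, hp₀ne⟩ := hdist i j hi hij hjh
  have hk1 : 1 ≤ k := le_trans hp₀1 hp₀k
  have hnle : ¬ BruhatLE k (L j) (L i) := by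
    intro hle
    have : j < i := hlin j i hj1 hjh hi hih ⟨hle, p₀, hp₀1, hp₀k, fun hc => hp₀ne hc.symm⟩
    omega
  unfold BruhatLE at hnle
  push_neg at hnle
  obtain ⟨s₁, hs₁1, hs₁k, hs₁g⟩ := hnle
  have hEx : ∃ s, 1 ≤ s ∧ s ≤ k ∧ ¬ GaleLE (Pr (L j) s) (Pr (L i) s) := ⟨s₁, hs₁1, hs₁k, hs₁g⟩
  set s₀ := Nat.find hEx with hs₀def
  obtain ⟨hs₀1, hs₀k, hs₀g⟩ := Nat.find_spec hEx
  -- counting violation at s₀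
  have hviol : ∃ m, cnt (Pr (L j) s₀) m < cnt (Pr (L i) s₀) m := by
    by_contra hc
    push_neg at hc
    exact hs₀g (gale_of_cnt hc)
  obtain ⟨m₀, hm₀⟩ := hviol
  -- CLE at s₀ - 1
  obtain ⟨s', hs'⟩ : ∃ s', s₀ = s' + 1 := ⟨s₀ - 1, by omega⟩
  have hbase : ∀ m, cnt (Pr (L i) s') m ≤ cnt (Pr (L j) s') m := by
    rcases Nat.eq_zero_or_pos s' with h0 | hpos
    · intro m; rw [h0, Pr_zero, Pr_zero]
    · have hng : GaleLE (Pr (L j) s') (Pr (L i) s') := by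
        by_contra hc
        have := Nat.find_min hEx (m := s') (by omega)
        push_neg at this
        exact hc (this hpos (by omega))
      exact cnt_of_gale hng (by rw [Pr_card hvy (by omega), Pr_card hvx (by omega)])
  -- m₀ < L j s₀
  have hm₀y : m₀ < L j s₀ := by
    by_contra hc
    push_neg at hc
    have e1 : cnt (Pr (L j) s₀) m₀ = cnt (Pr (L j) s') m₀ + 1 := by
      rw [hs', Pr_succ, cnt_insert (Pr_not_mem hvy (by omega) (by omega))]
      rw [← hs']
      simp [hc]
    have e2 : cnt (Pr (L i) s₀) m₀ ≤ cnt (Pr (L i) s') m₀ + 1 := by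
      rw [hs', Pr_succ, cnt_insert (Pr_not_mem hvx (by omega) (by omega))]
      split <;> omega
    have := hbase m₀
    omega
  -- find good r, w
  obtain ⟨r, w, hr1, hrk, hwr, hwlt, hw1, hwn, hwm, mv, hmv⟩ :=
    exists_good n k (L i) (L j) hvx hvy (k - s₀) s₀ rfl hs₀1 hs₀k ⟨m₀, hm₀, hm₀y⟩
  -- build z
  obtain ⟨z, hvz, hPs, hgale, hPne, hble, hzr⟩ :=
    key n k r w (L j) hvy hr1 hrk hwr hwlt hw1 hwn hwm
  -- z is in the ideal
  obtain ⟨m', hm'1, hm'h, hm'eq⟩ := hideal j hj1 hjh z hvz hble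
  -- Pr of L m' equals Pr of z
  have hPrm' : ∀ s, s ≤ k → Pr (L m') s = Pr z s := by
    intro s hsk
    exact Pr_congr (fun p hp1 hp2 => hm'eq p hp1 (by omega))
  have hm'lt : BruhatLT k (L m') (L j) := by
    constructor
    · intro s h1 h2
      rw [hPrm' s h2]
      exact hble s h1 h2
    · refine ⟨r, hr1, hrk, ?_⟩
      rw [hm'eq r hr1 hrk]
      exact hzr
  have hm'j : m' < j := hlin m' j hm'1 hm'h hj1 hjh hm'lt
  refine ⟨m', hm'1, hm'j, ?_, ?_⟩
  · -- card condition
    have hinter : Pflag k (L m') ∩ Pflag k (L j) = (Pflag k (L j)).erase (Pr (L j) r) := by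
      ext a
      simp only [Finset.mem_inter, Finset.mem_erase]
      constructor
      · rintro ⟨ha1, ha2⟩
        refine ⟨?_, ha2⟩
        obtain ⟨s, hs1, hsk, hseq⟩ := mem_Pflag.mp ha1
        obtain ⟨t, ht1, htk, hteq⟩ := mem_Pflag.mp ha2
        rw [hPrm' s hsk] at hseq
        intro hcon
        by_cases hsr : s = r
        · rw [hsr] at hseq
          exact hPne (hseq.trans hcon)
        · rw [hPs s hs1 hsk hsr] at hseq
          exact hsr (Pr_inj_flag hvy hsk hrk (hseq.trans hcon))
      · rintro ⟨hane, ha⟩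
        obtain ⟨s, hs1, hsk, hseq⟩ := mem_Pflag.mp ha
        have hsr : s ≠ r := fun hc => hane (by rw [← hseq, hc])
        refine ⟨mem_Pflag.mpr ⟨s, hs1, hsk, ?_⟩, ha⟩
        rw [hPrm' s hsk, hPs s hs1 hsk hsr, hseq]
    rw [hinter]
    have hmemr : Pr (L j) r ∈ Pflag k (L j) := mem_Pflag.mpr ⟨r, hr1, hrk, rfl⟩
    have hcard : (Pflag k (L j)).card = k := by
      rw [Pflag, Finset.card_image_of_injOn, Nat.card_Icc]
      · omega
      · intro a ha b hb hab
        rw [Finset.coe_Icc, Set.mem_Icc] at ha hb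
        exact Pr_inj_flag hvy ha.2 hb.2 hab
    rw [Finset.card_erase_of_mem hmemr, hcard]
  · -- containment
    intro a ha
    obtain ⟨ha1, ha2⟩ := Finset.mem_inter.mp ha
    obtain ⟨s, hs1, hsk, hseq⟩ := mem_Pflag.mp ha1
    obtain ⟨t, ht1, htk, hteq⟩ := mem_Pflag.mp ha2
    have hst : s = t := by
      have c1 : a.card = s := by rw [← hseq]; exact Pr_card hvx hsk
      have c2 : a.card = t := by rw [← hteq]; exact Pr_card hvy htk
      omega
    have htr : t ≠ r := by
      intro hc
      rw [hc] at hteq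
      rw [hst, hc] at hseq
      -- then Pr (L i) r = Pr (L j) r, contradicting counting violation at r
      have : cnt (Pr (L j) r) mv = cnt (Pr (L i) r) mv := by rw [hseq.trans hteq.symm]
      omega
    refine Finset.mem_inter.mpr ⟨mem_Pflag.mpr ⟨t, ht1, htk, ?_⟩, ha2⟩
    rw [hPrm' t htk, hPs t ht1 htk htr, hteq]
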